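/- arXiv:1402.4763 — 8 statements merged into one kernel-verified Lean document; each statement's English description precedes it below -/
import Mathlib

section
/- For every natural number N ≥ 1 and every invertible real N×N matrix B, there exist a real orthogonal N×N matrix M and a real number μ₀ with 0 < μ₀ < 1 such that for every μ with 0 < μ < μ₀, every complex eigenvalue of the matrix I + μ·M·B has modulus strictly less than 1 (equivalently, the spectral radius of I + μ·M·B is less than 1). (This is the linear-algebra core of the Schmelcher–Diakonos result underlying Predictive Feedback Control: it can be proved by taking the polar decomposition B = OP with O orthogonal and P symmetric positive definite, and choosing M = −Oᵀ, so that MB = −P has strictly negative real spectrum.) -/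
open Matrix
open scoped MatrixOrder

/-- The real spectrum of a real matrix is unchanged by mapping entries into `ℂ`. -/
lemma spec_map_real {N : ℕ} (A : Matrix (Fin N) (Fin N) ℝ) :
    spectrum ℝ (A.map Complex.ofReal) = spectrum ℝ A := by
  ext s
  simp only [spectrum.mem_iff, not_iff_not]
  have key : algebraMap ℝ (Matrix (Fin N) (Fin N) ℂ) s - A.map Complex.ofReal
      = Complex.ofRealHom.mapMatrix (algebraMap ℝ (Matrix (Fin N) (Fin N) ℝ) s - A) := by
    ext i j
    simp [Matrix.algebraMap_matrix_apply, Matrix.map_apply, Matrix.sub_apply, apply_ite,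
      RingHom.mapMatrix_apply]
  rw [key, Matrix.isUnit_iff_isUnit_det, Matrix.isUnit_iff_isUnit_det, ← RingHom.map_det]
  simp [isUnit_iff_ne_zero]

/-- The complex spectrum of a Hermitian matrix is the range of its (real) eigenvalues. -/
lemma herm_spectrum_complex {N : ℕ} {A : Matrix (Fin N) (Fin N) ℂ} (hA : A.IsHermitian) :
    spectrum ℂ A = Set.range (fun i => (hA.eigenvalues i : ℂ)) := by
  conv_lhs => rw [hA.spectral_theorem]
  rw [Unitary.conjStarAlgAut_apply, Unitary.spectrum_star_right_conjugate, spectrum_diagonal]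
  rfl

/-- Schmelcher–Diakonos: for every invertible real `N × N` matrix `B` there exist an
orthogonal matrix `M` and `μ₀ ∈ (0,1)` such that for all `0 < μ < μ₀` every complex
eigenvalue of `I + μ • (M * B)` has modulus strictly less than one. -/
theorem stmt0 (N : ℕ) (hN : 1 ≤ N) (B : Matrix (Fin N) (Fin N) ℝ) (hB : IsUnit B) :
    ∃ (M : Matrix (Fin N) (Fin N) ℝ) (μ₀ : ℝ),
      M.transpose * M = 1 ∧ 0 < μ₀ ∧ μ₀ < 1 ∧
      ∀ μ : ℝ, 0 < μ → μ < μ₀ →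
        ∀ z ∈ spectrum ℂ ((1 + μ • (M * B)).map Complex.ofReal), ‖z‖ < 1 := by
  classical
  haveI : Nonempty (Fin N) := ⟨⟨0, hN⟩⟩
  have hdetB : IsUnit B.det := (Matrix.isUnit_iff_isUnit_det B).mp hB
  have hS : (Bᵀ * B).PosSemidef := by
    simpa using Matrix.posSemidef_conjTranspose_mul_self B
  set P := CFC.sqrt (Bᵀ * B) with hPdef
  have hPsd : P.PosSemidef := (CFC.sqrt_nonneg _).posSemidef
  have hPsymm : P.IsHermitian := hPsd.1
  have hPt : Pᵀ = P := by
    have h := hPsymm.eq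
    rwa [Matrix.conjTranspose_eq_transpose_of_trivial] at h
  have hPP : P * P = Bᵀ * B := CFC.sqrt_mul_sqrt_self _ hS.nonneg
  have hPunit : IsUnit P := by
    rw [Matrix.isUnit_iff_isUnit_det]
    have h2 : IsUnit ((P * P).det) := by
      rw [hPP, Matrix.det_mul, Matrix.det_transpose]
      exact hdetB.mul hdetB
    rw [Matrix.det_mul] at h2
    exact isUnit_of_mul_isUnit_left h2
  set M := -(P * B⁻¹) with hMdef
  have hMB : M * B = -P := by
    rw [hMdef, neg_mul, Matrix.mul_assoc, Matrix.nonsing_inv_mul B hdetB, Matrix.mul_one]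
  have hMtM : Mᵀ * M = 1 := by
    have : Mᵀ * M = (B⁻¹)ᵀ * (P * P) * B⁻¹ := by
      rw [hMdef]
      simp only [Matrix.transpose_neg, Matrix.transpose_mul, hPt, Matrix.neg_mul,
        Matrix.mul_neg, neg_neg]
      noncomm_ring
    rw [this, hPP]
    have hBB : B * B⁻¹ = 1 := Matrix.mul_nonsing_inv B hdetB
    calc (B⁻¹)ᵀ * (Bᵀ * B) * B⁻¹ = ((B * B⁻¹)ᵀ) * (B * B⁻¹) := by
          simp only [Matrix.transpose_mul]; noncomm_ring
      _ = 1 := by rw [hBB]; simp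
  set T : ℝ := Finset.univ.sup' Finset.univ_nonempty hPsymm.eigenvalues with hTdef
  have hT0 : 0 ≤ T :=
    le_trans (hPsd.eigenvalues_nonneg (Classical.arbitrary _))
      (Finset.le_sup' _ (Finset.mem_univ _))
  have hT1 : (0:ℝ) < T + 1 := by linarith
  refine ⟨M, min (1/2) (1/(T+1)), hMtM, by positivity, lt_of_le_of_lt (min_le_left _ _) (by norm_num), ?_⟩
  intro μ hμ0 hμ1 z hz
  have hμT : μ * (T + 1) < 1 := by
    have hμ' : μ < 1/(T+1) := lt_of_lt_of_le hμ1 (min_le_right _ _)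
    rw [lt_div_iff₀ hT1] at hμ'
    exact hμ'
  -- rewrite the matrix
  have hA' : (1 : Matrix (Fin N) (Fin N) ℝ) + μ • (M * B) = 1 - μ • P := by
    rw [hMB, smul_neg, ← sub_eq_add_neg]
  rw [hA'] at hz
  set A : Matrix (Fin N) (Fin N) ℝ := 1 - μ • P with hAdef
  have hAsymm : A.IsHermitian := by
    rw [hAdef]
    exact (Matrix.isHermitian_one).sub (IsSelfAdjoint.smul (star_trivial μ) hPsymm)
  have hji : ∀ i j, A j i = A i j := by
    intro i j
    conv_lhs => rw [← hAsymm]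
    simp [Matrix.conjTranspose_apply]
  have hAcH : (A.map Complex.ofReal).IsHermitian := by
    ext i j
    simp [Matrix.conjTranspose_apply, Matrix.map_apply, Complex.conj_ofReal, hji i j]
  rw [herm_spectrum_complex hAcH] at hz
  obtain ⟨i, hi⟩ := hz
  set t : ℝ := hAcH.eigenvalues i with htdef
  have ht : t ∈ spectrum ℝ (A.map Complex.ofReal) := hAcH.eigenvalues_mem_spectrum_real i
  rw [spec_map_real] at ht
  -- decompose the spectrum of 1 - μ • P
  set u : ℝˣ := Units.mk0 μ hμ0.ne' with hudef
  have hcoe : (u : ℝ) = μ := rfl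
  have hA2 : A = algebraMap ℝ (Matrix (Fin N) (Fin N) ℝ) 1 - u • P := by
    rw [hAdef, Units.smul_def, hcoe, _root_.map_one]
  rw [hA2, ← spectrum.singleton_sub_eq, Set.mem_sub] at ht
  obtain ⟨x, hx, y, hy, hxy⟩ := ht
  rw [Set.mem_singleton_iff] at hx
  rw [spectrum.unit_smul_eq_smul, Set.mem_smul_set] at hy
  obtain ⟨s, hs, hys⟩ := hy
  have hsrange : s ∈ Set.range hPsymm.eigenvalues := by
    rwa [← Matrix.IsHermitian.spectrum_real_eq_range_eigenvalues hPsymm]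
  obtain ⟨j, hj⟩ := hsrange
  have hs0 : 0 ≤ s := hj ▸ hPsd.eigenvalues_nonneg j
  have hsT : s ≤ T := hj ▸ Finset.le_sup' _ (Finset.mem_univ j)
  have hsne : s ≠ 0 := by
    rintro rfl
    exact (spectrum.zero_mem_iff ℝ).mp hs hPunit
  have hspos : 0 < s := lt_of_le_of_ne hs0 (Ne.symm hsne)
  -- conclude
  have hts : t = 1 - μ * s := by
    rw [← hxy, hx, ← hys, Units.smul_def, hcoe, smul_eq_mul]
  have habs : |t| < 1 := by
    rw [hts, abs_lt]
    constructor <;> nlinarith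
  rw [← hi]
  simpa using habs
end

section
/- Let λ₁, λ₂ be real numbers with −1 < λ₁ < 1 and λ₂ < −1 (a periodic orbit of saddle type with a flip-unstable direction). Then there exists μ ∈ (0, 1) such that |1 + μ·(λ₁ − 1)| < 1 and |1 + μ·(λ₂ − 1)| < 1. That is, such saddle orbits are PFC-stabilizable: both eigenvalues κⱼ(μ) = 1 + μ(λⱼ − 1) of the Predictive Feedback Control linearization lie strictly inside the unit interval for a suitable control parameter μ ∈ (0,1). -/
/-- Saddle periodic orbits with `λ₁ ∈ (-1,1)` and `λ₂ < -1` are PFC-stabilizable: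
there is a control parameter `μ ∈ (0,1)` with `|1 + μ(λⱼ - 1)| < 1` for `j = 1, 2`. -/
theorem stmt7 (lam1 lam2 : ℝ) (h1 : -1 < lam1) (h1' : lam1 < 1) (h2 : lam2 < -1) :
    ∃ μ : ℝ, 0 < μ ∧ μ < 1 ∧
      |1 + μ * (lam1 - 1)| < 1 ∧ |1 + μ * (lam2 - 1)| < 1 := by
  have hd : (0:ℝ) < 1 - lam2 := by linarith
  refine ⟨1 / (1 - lam2), by positivity, ?_, ?_, ?_⟩
  · rw [div_lt_one hd]; linarith
  · rw [abs_lt]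
    constructor
    · have : 1 / (1 - lam2) * (1 - lam1) < 2 := by
        have h : 1 / (1 - lam2) < 1 := by rw [div_lt_one hd]; linarith
        nlinarith [one_div_pos.mpr hd]
      nlinarith
    · nlinarith [one_div_pos.mpr hd]
  · have : 1 + 1 / (1 - lam2) * (lam2 - 1) = 0 := by field_simp; ring
    rw [this]; simp
end

section
/- Let k ≥ 1 and let λ₁, …, λ_k ∈ ℂ satisfy Re λⱼ < 1 for all j = 1, …, k. Then there exists μ ∈ (0, 1) such that |1 + μ·(λⱼ − 1)| < 1 for all j. (Eigenvalue tuples whose entries all lie in the region R₂ ∪ R₃ = {z ∈ ℂ : Re z < 1} are simultaneously stabilizable by Predictive Feedback Control with a positive control parameter.) -/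
/-- Eigenvalue tuples lying in `R₂ ∪ R₃ = {z : Re z < 1}` are simultaneously
stabilizable by Predictive Feedback Control with a positive control parameter
`μ ∈ (0, 1)`. -/
theorem stmt9 (k : ℕ) (hk : 1 ≤ k) (lam : Fin k → ℂ) (h : ∀ j, (lam j).re < 1) :
    ∃ μ : ℝ, 0 < μ ∧ μ < 1 ∧
      ∀ j, ‖1 + (μ : ℂ) * (lam j - 1)‖ < 1 := by
  have hkpos : 0 < k := hk
  haveI : Nonempty (Fin k) := ⟨⟨0, hkpos⟩⟩
  set c : Fin k → ℝ := fun j => -(lam j - 1).re / Complex.normSq (lam j - 1) with hc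
  have hz : ∀ j, (lam j - 1).re < 0 := by
    intro j; simp [Complex.sub_re]; linarith [h j]
  have hns : ∀ j, 0 < Complex.normSq (lam j - 1) := by
    intro j
    have : lam j - 1 ≠ 0 := by
      intro hz0
      have := hz j
      rw [hz0] at this
      simp at this
    exact Complex.normSq_pos.2 this
  have hcpos : ∀ j, 0 < c j := fun j =>
    div_pos (by linarith [hz j]) (hns j)
  set m : ℝ := Finset.univ.inf' Finset.univ_nonempty c with hm
  have hmpos : 0 < m := by
    rw [hm, Finset.lt_inf'_iff]
    exact fun j _ => hcpos j
  refine ⟨min (1/2) m / 2, by positivity, ?_, ?_⟩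
  · have : min (1/2) m ≤ 1/2 := min_le_left _ _
    linarith
  · intro j
    set μ : ℝ := min (1/2) m / 2 with hμ
    have hμpos : 0 < μ := by positivity
    have hμle : μ ≤ c j := by
      have h1 : m ≤ c j := Finset.inf'_le _ (Finset.mem_univ j)
      have h2 : min (1/2) m ≤ m := min_le_right _ _
      have := hcpos j
      calc μ ≤ m / 2 := by unfold μ; linarith
        _ ≤ c j := by linarith
    have key : ‖1 + (μ : ℂ) * (lam j - 1)‖ ^ 2 < 1 := by
      rw [Complex.sq_norm, Complex.normSq_apply]
      simp [Complex.add_re, Complex.add_im, Complex.mul_re, Complex.mul_im]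
      have hre := hz j
      have hn := hns j
      have hle : μ * Complex.normSq (lam j - 1) ≤ -(lam j - 1).re :=
        (le_div_iff₀ hn).1 hμle
      have e1 : (lam j - 1).re = (lam j).re - 1 := by simp
      have e2 : (lam j - 1).im = (lam j).im := by simp
      have hnsq : Complex.normSq (lam j - 1)
          = ((lam j).re - 1) ^ 2 + (lam j).im ^ 2 := by
        rw [Complex.normSq_apply, e1, e2]; ring
      rw [e1] at hre hle
      rw [hnsq] at hle
      nlinarith [hμpos, hre, hle, mul_le_mul_of_nonneg_left hle hμpos.le]
    nlinarith [norm_nonneg (1 + (μ : ℂ) * (lam j - 1)), key]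
end

section
/- Let k ≥ 1 and let w₁, …, w_k ∈ ℂ be nonzero. Suppose there is a vector v = (v₁, v₂) ∈ ℝ² such that v₁ · ln|wⱼ| + v₂ · (Re wⱼ − 1) < 0 for every j = 1, …, k (i.e., v lies in the common domain of stability of the tuple). Then there exists t₀ > 0 such that for all t ∈ (0, t₀) and all j, L_{wⱼ}(t·v₁, t·v₂) < 1. In particular there exist parameters (α₀, μ₀) with L_{wⱼ}(α₀, μ₀) < 1 for all j simultaneously, and if v₁ ≥ 0 then (α₀, μ₀) can be chosen with α₀ ≥ 0. -/
lemma single_descent (w : ℂ) (hw : w ≠ 0) (v1 v2 : ℝ)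
    (hv : v1 * Real.log ‖w‖ + v2 * (w.re - 1) < 0) :
    ∃ ε : ℝ, 0 < ε ∧ ∀ t : ℝ, 0 < t → t < ε →
      ‖w‖ ^ (t * v1) * ‖1 + ((t * v2 : ℝ) : ℂ) * (w - 1)‖ ^ (1 - t * v1) < 1 := by
  set c := w - 1 with hc
  have hA : 0 < ‖w‖ := by
    simpa using (norm_pos_iff.mpr hw)
  set A := ‖w‖ with hAdef
  set q : ℝ → ℝ := fun t => (1 + t * v2 * c.re)^2 + (t * v2 * c.im)^2 with hqdef
  have habs : ∀ t : ℝ, ‖1 + ((t * v2 : ℝ) : ℂ) * c‖ = Real.sqrt (q t) := by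
    intro t
    rw [Complex.norm_def, Complex.normSq_apply]
    congr 1
    simp [q]
    ring
  have hq0 : ∀ t, 0 ≤ q t := fun t => by positivity
  have hq00 : q 0 = 1 := by simp [q]
  have hlog : ∀ t : ℝ, Real.log (‖1 + ((t * v2 : ℝ) : ℂ) * c‖)
      = Real.log (q t) / 2 := by
    intro t; rw [habs, Real.log_sqrt (hq0 t)]
  have hdq : HasDerivAt q (2 * (v2 * c.re)) 0 := by
    have h1 : HasDerivAt (fun t : ℝ => 1 + t * v2 * c.re) (v2 * c.re) 0 := by
      have := ((hasDerivAt_id (0:ℝ)).mul_const (v2 * c.re)).const_add 1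
      simpa [mul_assoc] using this
    have h2 : HasDerivAt (fun t : ℝ => t * v2 * c.im) (v2 * c.im) 0 := by
      have := (hasDerivAt_id (0:ℝ)).mul_const (v2 * c.im)
      simpa [mul_assoc] using this
    have := (h1.pow 2).add (h2.pow 2)
    refine this.congr_deriv ?_
    norm_num
  have hq0ne : q 0 ≠ 0 := by rw [hq00]; norm_num
  have hg : HasDerivAt (fun t => Real.log (q t) / 2) (v2 * c.re) 0 := by
    have := (hdq.log hq0ne).div_const 2
    refine this.congr_deriv ?_
    rw [hq00]
    ring
  set F : ℝ → ℝ := fun t => t * v1 * Real.log A + (1 - t * v1) * (Real.log (q t) / 2) with hFdef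
  have hF0 : F 0 = 0 := by simp [F, hq00]
  have hF : HasDerivAt F (v1 * Real.log A + v2 * (w.re - 1)) 0 := by
    have h1 : HasDerivAt (fun t : ℝ => t * v1 * Real.log A) (v1 * Real.log A) 0 := by
      have := ((hasDerivAt_id (0:ℝ)).mul_const v1).mul_const (Real.log A)
      simpa using this
    have h2 : HasDerivAt (fun t : ℝ => 1 - t * v1) (-v1) 0 := by
      have := ((hasDerivAt_id (0:ℝ)).mul_const v1).const_sub 1
      simpa using this
    have := h1.add (h2.mul hg)
    refine this.congr_deriv ?_
    rw [hq00]
    have : c.re = w.re - 1 := by simp [hc]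
    rw [this]
    simp
  have hD : v1 * Real.log A + v2 * (w.re - 1) < 0 := hv
  have hs := hasDerivAt_iff_tendsto_slope.mp hF
  have ev1 : ∀ᶠ t in nhdsWithin 0 {(0:ℝ)}ᶜ, slope F 0 t < 0 :=
    hs.eventually_lt_const hD
  have hcont : Continuous q := by fun_prop
  have ev2 : ∀ᶠ t in nhds (0:ℝ), 0 < q t := by
    have := (hcont.tendsto 0).eventually_const_lt (by rw [hq00]; norm_num : (0:ℝ) < q 0)
    exact this
  have ev1' : ∀ᶠ t in nhdsWithin 0 (Set.Ioi (0:ℝ)), slope F 0 t < 0 :=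
    ev1.filter_mono (nhdsWithin_mono 0 (fun x hx => ne_of_gt hx))
  have ev2' : ∀ᶠ t in nhdsWithin 0 (Set.Ioi (0:ℝ)), 0 < q t :=
    ev2.filter_mono nhdsWithin_le_nhds
  have evAll := ev1'.and ev2'
  rw [eventually_nhdsWithin_iff, Metric.eventually_nhds_iff] at evAll
  obtain ⟨ε, hε, hball⟩ := evAll
  refine ⟨ε, hε, fun t ht htε => ?_⟩
  have hdist : dist t 0 < ε := by
    rw [Real.dist_eq, sub_zero, abs_of_pos ht]; exact htε
  obtain ⟨hslope, hqt⟩ := hball hdist ht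
  have hFt : F t < 0 := by
    have hslope' : F t / t < 0 := by
      have : slope F 0 t = F t / t := by
        rw [slope_def_field, hF0, sub_zero, sub_zero]
      rwa [this] at hslope
    have : F t = (F t / t) * t := by field_simp
    rw [this]
    exact mul_neg_of_neg_of_pos hslope' ht
  have hB : 0 < ‖1 + ((t * v2 : ℝ) : ℂ) * c‖ := by
    rw [habs]; exact Real.sqrt_pos.mpr hqt
  have hpos : 0 < A ^ (t * v1) * ‖1 + ((t * v2 : ℝ) : ℂ) * c‖ ^ (1 - t * v1) :=
    mul_pos (Real.rpow_pos_of_pos hA _) (Real.rpow_pos_of_pos hB _)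
  have hlogL : Real.log (A ^ (t * v1) * ‖1 + ((t * v2 : ℝ) : ℂ) * c‖ ^ (1 - t * v1)) = F t := by
    rw [Real.log_mul (ne_of_gt (Real.rpow_pos_of_pos hA _)) (ne_of_gt (Real.rpow_pos_of_pos hB _)),
      Real.log_rpow hA, Real.log_rpow hB, hlog t]
  exact (Real.log_neg_iff hpos).mp (by rw [hlogL]; exact hFt)


/-- The rescaled stability function of Stalled Predictive Feedback Control:
`L_w(α, μ) = |w|^α * |1 + μ(w - 1)|^(1-α)` (real powers). -/
noncomputable def stabilityFunction (w : ℂ) (α μ : ℝ) : ℝ :=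
  ‖w‖ ^ α * ‖1 + (μ : ℂ) * (w - 1)‖ ^ (1 - α)

/-- A common strict descent direction `v = (v₁, v₂)` at the origin (i.e.
`v₁ ln|wⱼ| + v₂ (Re wⱼ - 1) < 0` for all `j`) yields parameters along the ray `t • v`,
for all sufficiently small `t > 0`, at which all stability functions are `< 1`
simultaneously; in particular such parameters `(α₀, μ₀)` exist, with `α₀ ≥ 0`
whenever `v₁ ≥ 0`. -/
theorem stmt12 (k : ℕ) (hk : 1 ≤ k) (w : Fin k → ℂ) (hw : ∀ j, w j ≠ 0)
    (v1 v2 : ℝ)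
    (hv : ∀ j, v1 * Real.log ‖w j‖ + v2 * ((w j).re - 1) < 0) :
    (∃ t₀ : ℝ, 0 < t₀ ∧ ∀ t : ℝ, 0 < t → t < t₀ →
      ∀ j, stabilityFunction (w j) (t * v1) (t * v2) < 1) ∧
    (∃ α₀ μ₀ : ℝ, (0 ≤ v1 → 0 ≤ α₀) ∧ ∀ j, stabilityFunction (w j) α₀ μ₀ < 1) := by
  have key : ∀ j, ∃ ε : ℝ, 0 < ε ∧ ∀ t : ℝ, 0 < t → t < ε →
      stabilityFunction (w j) (t * v1) (t * v2) < 1 := by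
    intro j
    obtain ⟨ε, hε, h⟩ := single_descent (w j) (hw j) v1 v2 (hv j)
    exact ⟨ε, hε, fun t ht htε => by
      have := h t ht htε
      simpa [stabilityFunction] using this⟩
  choose ε hεpos hε using key
  haveI : Nonempty (Fin k) := ⟨⟨0, hk⟩⟩
  have hne : (Finset.univ : Finset (Fin k)).Nonempty := Finset.univ_nonempty
  set t₀ := Finset.univ.inf' hne ε with ht₀def
  have ht₀pos : 0 < t₀ := by
    rw [ht₀def, Finset.lt_inf'_iff]
    exact fun j _ => hεpos j
  have hmain : ∀ t : ℝ, 0 < t → t < t₀ → ∀ j, stabilityFunction (w j) (t * v1) (t * v2) < 1 := by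
    intro t ht htt j
    exact hε j t ht (lt_of_lt_of_le htt (Finset.inf'_le _ (Finset.mem_univ j)))
  refine ⟨⟨t₀, ht₀pos, hmain⟩, ⟨(t₀/2) * v1, (t₀/2) * v2, ?_, ?_⟩⟩
  · intro hv1
    exact mul_nonneg (by linarith) hv1
  · exact hmain (t₀/2) (by linarith) (by linarith)
end

section
/- Let w₁, w₂ ∈ ℂ be nonzero and assume the two vectors u₁ = (ln|w₁|, Re w₁ − 1) and u₂ = (ln|w₂|, Re w₂ − 1) in ℝ² are linearly independent. Then there exists (α, μ) ∈ ℝ² such that L_{w₁}(α, μ) < 1 and L_{w₂}(α, μ) < 1. That is, for a two-dimensional system, linear independence of the gradients of the stability functions at the origin guarantees that the pair of eigenvalues is stabilizable by Stalled Predictive Feedback Control. -/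
open Filter Topology

lemma spfc_key (w : ℂ) (hw : w ≠ 0) (a m : ℝ)
    (h : a * Real.log ‖w‖ + m * (w.re - 1) < 0) :
    ∀ᶠ t in 𝓝[>] (0:ℝ), stabilityFunction w (t*a) (t*m) < 1 := by
  set L := Real.log ‖w‖ with hLdef
  set c := m * (w.re - 1) with hcdef
  set d := m * w.im with hddef
  set F : ℝ → ℝ := fun t => (1+t*c)^2 + (t*d)^2 with hFdef
  set G : ℝ → ℝ := fun t => (t*a) * L + (1 - t*a) * ((1/2) * Real.log (F t)) with hGdef
  have hG0 : G 0 = 0 := by simp [hGdef, hFdef]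
  -- derivative of F at 0
  have hhF : HasDerivAt F (2*c) 0 := by
    have h1 : HasDerivAt (fun t : ℝ => (1+t*c)^2) (2*c) 0 := by
      have h0 : HasDerivAt (fun t : ℝ => 1+t*c) c 0 := by
        simpa using ((hasDerivAt_id (0:ℝ)).mul_const c).const_add 1
      have := h0.pow 2
      norm_num at this
      exact this
    have h2 : HasDerivAt (fun t : ℝ => (t*d)^2) 0 0 := by
      have h0 : HasDerivAt (fun t : ℝ => t*d) d 0 := by
        simpa using (hasDerivAt_id (0:ℝ)).mul_const d
      have := h0.pow 2
      norm_num at this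
      exact this
    have := h1.add h2; rw [add_zero] at this; exact this
  have hF0 : F 0 = 1 := by simp [hFdef]
  have hlog : HasDerivAt (fun t : ℝ => Real.log (F t)) (2*c) 0 := by
    have := hhF.log (by rw [hF0]; norm_num)
    simpa [hF0] using this
  have hGd : HasDerivAt G (a*L + c) 0 := by
    have hg1 : HasDerivAt (fun t : ℝ => (t*a) * L) (a*L) 0 := by
      have := (hasDerivAt_id (0:ℝ)).mul_const (a*L)
      simpa [mul_assoc] using this
    have hg2 : HasDerivAt (fun t : ℝ => 1 - t*a) (-a) 0 := by
      simpa using (((hasDerivAt_id (0:ℝ)).mul_const a).const_sub 1)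
    have hg3 : HasDerivAt (fun t : ℝ => (1/2) * Real.log (F t)) c 0 := by
      have := hlog.const_mul (1/2 : ℝ)
      simpa [mul_comm, mul_assoc, mul_left_comm] using this
    have := hg1.add (hg2.mul hg3)
    have e : a*L + (-a * ((1/2) * Real.log (F 0)) + (1 - 0*a) * c) = a*L + c := by
      rw [hF0]; simp
    rw [e] at this
    exact this
  -- slope eventually negative
  have hslope : ∀ᶠ t in 𝓝[≠] (0:ℝ), slope G 0 t < 0 := by
    rw [hasDerivAt_iff_tendsto_slope] at hGd
    exact hGd.eventually (eventually_lt_nhds h)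
  have hslope' : ∀ᶠ t in 𝓝[>] (0:ℝ), slope G 0 t < 0 :=
    hslope.filter_mono (nhdsWithin_mono 0 (fun x hx => ne_of_gt hx))
  -- F eventually positive
  have hFc : ContinuousAt F 0 := by fun_prop
  have hFpos : ∀ᶠ t in 𝓝[>] (0:ℝ), 0 < F t := by
    have : ∀ᶠ t in 𝓝 (0:ℝ), 0 < F t := by
      have := hFc.tendsto
      rw [hF0] at this
      exact this.eventually (eventually_gt_nhds (by norm_num))
    exact this.filter_mono nhdsWithin_le_nhds
  filter_upwards [hslope', hFpos, self_mem_nhdsWithin] with t hs hFt ht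
  have ht0 : (0:ℝ) < t := ht
  have hGt : G t < 0 := by
    rw [slope_def_field, hG0, sub_zero, sub_zero] at hs
    have := mul_neg_of_neg_of_pos hs ht0
    rwa [div_mul_cancel₀ _ (ne_of_gt ht0)] at this
  -- rewrite stability function as exp (G t)
  have habsw : 0 < ‖w‖ := by
    simpa using norm_pos_iff.mpr hw
  have hz : Complex.normSq (1 + ((t*m : ℝ) : ℂ) * (w - 1)) = F t := by
    simp [Complex.normSq_apply, hFdef, hcdef, hddef]
    ring
  have hzabs : ‖1 + ((t*m : ℝ) : ℂ) * (w - 1)‖ = Real.sqrt (F t) := by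
    rw [Complex.norm_def, hz]
  have hsq : 0 < Real.sqrt (F t) := Real.sqrt_pos.mpr hFt
  have : stabilityFunction w (t*a) (t*m) = Real.exp (G t) := by
    rw [stabilityFunction, hzabs, Real.rpow_def_of_pos habsw, Real.rpow_def_of_pos hsq,
      ← Real.exp_add, Real.log_sqrt (le_of_lt hFt)]
    congr 1
    rw [hGdef]
    ring
  rw [this]
  exact Real.exp_lt_one_iff.mpr hGt

/-- If the gradients `(ln|w₁|, Re w₁ - 1)` and `(ln|w₂|, Re w₂ - 1)` of the stability
functions at the origin are linearly independent, then the pair of eigenvalues is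
SPFC-stabilizable: there are parameters `(α, μ)` with `L_{w₁}(α,μ) < 1` and
`L_{w₂}(α,μ) < 1`. -/
theorem stmt13 (w₁ w₂ : ℂ) (hw₁ : w₁ ≠ 0) (hw₂ : w₂ ≠ 0)
    (hli : LinearIndependent ℝ
      ![(Real.log ‖w₁‖, w₁.re - 1), (Real.log ‖w₂‖, w₂.re - 1)]) :
    ∃ α μ : ℝ, stabilityFunction w₁ α μ < 1 ∧ stabilityFunction w₂ α μ < 1 := by
  set p₁ := Real.log ‖w₁‖ with hp₁
  set q₁ := w₁.re - 1 with hq₁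
  set p₂ := Real.log ‖w₂‖ with hp₂
  set q₂ := w₂.re - 1 with hq₂
  rw [LinearIndependent.pair_iff] at hli
  have hD : p₁ * q₂ - p₂ * q₁ ≠ 0 := by
    intro hD0
    have h1 := hli q₂ (-q₁) (by
      simp [Prod.ext_iff, smul_eq_mul]
      constructor
      · linarith [hD0]
      · ring)
    have h2 := hli p₂ (-p₁) (by
      simp [Prod.ext_iff, smul_eq_mul]
      constructor
      · ring
      · linarith [hD0])
    have := hli 1 0 (by
      simp [Prod.ext_iff, h1.1, h1.2, h2.1, h2.2]
      constructor
      · have := h2.2; linarith [neg_eq_zero.mp h2.2]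
      · linarith [neg_eq_zero.mp h1.2])
    exact one_ne_zero this.1
  set D := p₁ * q₂ - p₂ * q₁ with hDdef
  set a := (q₁ - q₂)/D with hadef
  set m := (p₂ - p₁)/D with hmdef
  have h1 : a * p₁ + m * q₁ < 0 := by
    have : a * p₁ + m * q₁ = -1 := by
      rw [hadef, hmdef]; field_simp; ring
    rw [this]; norm_num
  have h2 : a * p₂ + m * q₂ < 0 := by
    have : a * p₂ + m * q₂ = -1 := by
      rw [hadef, hmdef]; field_simp; ring
    rw [this]; norm_num
  have k1 := spfc_key w₁ hw₁ a m h1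
  have k2 := spfc_key w₂ hw₂ a m h2
  obtain ⟨t, h1t, h2t⟩ := (k1.and k2).exists
  exact ⟨t*a, t*m, h1t, h2t⟩
end

section
/- Let λ₁, λ₂ be real numbers with −1 < λ₁ < 1 and λ₂ < −1, and set μ* = 1/(1 − λ₂). Then μ* ∈ (0, 1/2), the controlled eigenvalues satisfy 1 + μ*(λ₂ − 1) = 0 and 1 + μ*(λ₁ − 1) = (λ₁ − λ₂)/(1 − λ₂) ∈ (0, 1), and consequently for every m ≥ 1 and every n ≥ 0 the Stalled Predictive Feedback Control eigenvalues obey |λ₁|ⁿ · |1 + μ*(λ₁ − 1)|ᵐ < 1 and |λ₂|ⁿ · |1 + μ*(λ₂ − 1)|ᵐ = 0 < 1. Hence a saddle periodic orbit with these local stability properties is stabilized by Stalled Predictive Feedback Control at μ = μ* for every choice of stalling parameters with m ≥ 1. -/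
/-- At `μ* = 1/(1 - λ₂)` a saddle orbit with `λ₁ ∈ (-1,1)`, `λ₂ < -1` satisfies:
`μ* ∈ (0, 1/2)`, the controlled eigenvalues are `1 + μ*(λ₂-1) = 0` and
`1 + μ*(λ₁-1) = (λ₁-λ₂)/(1-λ₂) ∈ (0,1)`, and for every `m ≥ 1`, `n ≥ 0` the
Stalled Predictive Feedback Control eigenvalues satisfy
`|λ₁|ⁿ |1+μ*(λ₁-1)|ᵐ < 1` and `|λ₂|ⁿ |1+μ*(λ₂-1)|ᵐ = 0`. -/
theorem stmt14 (lam1 lam2 : ℝ) (h1 : -1 < lam1) (h1' : lam1 < 1) (h2 : lam2 < -1)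
    (μ : ℝ) (hμ : μ = 1 / (1 - lam2)) :
    0 < μ ∧ μ < 1 / 2 ∧
    1 + μ * (lam2 - 1) = 0 ∧
    1 + μ * (lam1 - 1) = (lam1 - lam2) / (1 - lam2) ∧
    0 < (lam1 - lam2) / (1 - lam2) ∧ (lam1 - lam2) / (1 - lam2) < 1 ∧
    ∀ m n : ℕ, 1 ≤ m →
      |lam1| ^ n * |1 + μ * (lam1 - 1)| ^ m < 1 ∧
      |lam2| ^ n * |1 + μ * (lam2 - 1)| ^ m = 0 := by
  have hd : (0:ℝ) < 1 - lam2 := by linarith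
  have hd' : (1 - lam2) ≠ 0 := ne_of_gt hd
  have hμ0 : 0 < μ := by rw [hμ]; positivity
  have hμh : μ < 1 / 2 := by
    rw [hμ]
    rw [div_lt_div_iff₀ hd (by norm_num)]
    linarith
  have he2 : 1 + μ * (lam2 - 1) = 0 := by
    rw [hμ]; field_simp; ring
  have he1 : 1 + μ * (lam1 - 1) = (lam1 - lam2) / (1 - lam2) := by
    rw [hμ]; field_simp; ring
  have hq0 : 0 < (lam1 - lam2) / (1 - lam2) := by
    apply div_pos (by linarith) hd
  have hq1 : (lam1 - lam2) / (1 - lam2) < 1 := by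
    rw [div_lt_one hd]; linarith
  refine ⟨hμ0, hμh, he2, he1, hq0, hq1, ?_⟩
  intro m n hm
  constructor
  · have h1abs : |lam1| ^ n ≤ 1 := by
      apply pow_le_one₀ (abs_nonneg _)
      rw [abs_le]; constructor <;> linarith
    have h2abs : |1 + μ * (lam1 - 1)| ^ m < 1 := by
      apply pow_lt_one₀ (abs_nonneg _) _ (by omega)
      rw [he1, abs_of_pos hq0]; exact hq1
    calc |lam1| ^ n * |1 + μ * (lam1 - 1)| ^ m ≤ 1 * |1 + μ * (lam1 - 1)| ^ m := by
          apply mul_le_mul_of_nonneg_right h1abs (by positivity)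
      _ < 1 := by simpa using h2abs
  · rw [he2]
    simp [zero_pow (by omega : m ≠ 0)]
end

section
/- Let λ₁, λ₂ be real numbers with −1 < λ₁ < 1, λ₁ ≠ 0, and λ₂ < −1, and set c = (λ₁ − λ₂)/(1 − λ₂) ∈ (0, 1). Then the rescaled asymptotic convergence rate of Stalled Predictive Feedback Control with m = 1 control step and n stalling steps at μ = 1/(1 − λ₂), namely r(n) = (|λ₁|ⁿ · c)^{1/(n+1)} = |λ₁|^{n/(n+1)} · c^{1/(n+1)}, tends to |λ₁| as n → ∞. In particular, for every ε > 0 there exists n such that r(n) < |λ₁| + ε: by stalling, the convergence rate per evaluation of the map can be made arbitrarily close to the contraction rate |λ₁| of the stable direction, independently of the instability λ₂. -/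
/-- Stalling makes the per-evaluation convergence rate approach the contraction rate of
the stable direction: with `c = (λ₁-λ₂)/(1-λ₂)`, the rescaled rate
`r(n) = (|λ₁|ⁿ · c)^(1/(n+1))` of SPFC with `m = 1` control step, `n` stalling steps and
`μ = 1/(1-λ₂)` tends to `|λ₁|` as `n → ∞`; in particular for every `ε > 0` there is `n`
with `r(n) < |λ₁| + ε`. -/
theorem stmt15 (lam1 lam2 : ℝ) (h1 : -1 < lam1) (h1' : lam1 < 1) (h1'' : lam1 ≠ 0)
    (h2 : lam2 < -1) (c : ℝ) (hc : c = (lam1 - lam2) / (1 - lam2)) :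
    Filter.Tendsto (fun n : ℕ => (|lam1| ^ n * c) ^ (1 / ((n : ℝ) + 1)))
      Filter.atTop (nhds |lam1|) ∧
    ∀ ε : ℝ, 0 < ε → ∃ n : ℕ, (|lam1| ^ n * c) ^ (1 / ((n : ℝ) + 1)) < |lam1| + ε := by
  have hcpos : 0 < c := by
    rw [hc]
    apply div_pos <;> linarith
  have ha : 0 < |lam1| := abs_pos.mpr h1''
  set L := Real.log |lam1| with hL
  set M := Real.log c with hM
  have key : Filter.Tendsto (fun n : ℕ => (|lam1| ^ n * c) ^ (1 / ((n : ℝ) + 1)))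
      Filter.atTop (nhds |lam1|) := by
    have heq : (fun n : ℕ => (|lam1| ^ n * c) ^ (1 / ((n : ℝ) + 1)))
        = fun n : ℕ => Real.exp (L + (M - L) * (1 / ((n : ℝ) + 1))) := by
      funext n
      have hpos : 0 < |lam1| ^ n * c := by positivity
      have hn1 : ((n : ℝ) + 1) ≠ 0 := by positivity
      rw [Real.rpow_def_of_pos hpos, Real.log_mul (by positivity) (ne_of_gt hcpos),
        Real.log_pow]
      congr 1
      field_simp
      simp only [hL, hM, Real.log_abs]
      ring
    rw [heq]
    have h0 : Filter.Tendsto (fun n : ℕ => L + (M - L) * (1 / ((n : ℝ) + 1)))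
        Filter.atTop (nhds (L + (M - L) * 0)) :=
      Filter.Tendsto.const_add _ (Filter.Tendsto.const_mul _
        tendsto_one_div_add_atTop_nhds_zero_nat)
    have := (Real.continuous_exp.tendsto _).comp h0
    have hE : Real.exp L = |lam1| := Real.exp_log ha
    rw [mul_zero, add_zero, hE] at this
    exact this
  refine ⟨key, fun ε hε => ?_⟩
  have : ∀ᶠ n : ℕ in Filter.atTop,
      (|lam1| ^ n * c) ^ (1 / ((n : ℝ) + 1)) < |lam1| + ε :=
    key.eventually (Filter.Tendsto.eventually_lt_const (by linarith) Filter.tendsto_id)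
  exact this.exists
end

section
/- Let λ₁, λ₂ be real numbers with −1 < λ₁ < 1 and λ₂ < −1. Then for every μ ∈ ℝ, max(|1 + μ·(λ₁ − 1)|, |1 + μ·(λ₂ − 1)|) > 1 − 2·(1 − λ₁)/(1 − λ₂). In particular, the spectral radius of the Predictive Feedback Control linearization at such a saddle fixed point is bounded below, uniformly in the control parameter μ, by 1 − 2(1 − λ₁)/(1 − λ₂); as λ₂ → −∞ this bound tends to 1, which is the speed limit of Predictive Feedback Control for strongly unstable orbits. -/
/-- Speed limit of Predictive Feedback Control: for a saddle fixed point with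
`λ₁ ∈ (-1,1)` and `λ₂ < -1`, the spectral radius `max(|1+μ(λ₁-1)|, |1+μ(λ₂-1)|)` of the
PFC linearization exceeds `1 - 2(1-λ₁)/(1-λ₂)` for every control parameter `μ`. -/
theorem stmt16 (lam1 lam2 : ℝ) (h1 : -1 < lam1) (h1' : lam1 < 1) (h2 : lam2 < -1)
    (μ : ℝ) :
    1 - 2 * (1 - lam1) / (1 - lam2)
      < max |1 + μ * (lam1 - 1)| |1 + μ * (lam2 - 1)| := by
  by_contra h
  push_neg at h
  have hf : |1 + μ * (lam1 - 1)| ≤ 1 - 2 * (1 - lam1) / (1 - lam2) :=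
    le_trans (le_max_left _ _) h
  have hg : |1 + μ * (lam2 - 1)| ≤ 1 - 2 * (1 - lam1) / (1 - lam2) :=
    le_trans (le_max_right _ _) h
  rw [abs_le] at hf hg
  have hd2 : (0:ℝ) < 1 - lam2 := by linarith
  have hd1 : (0:ℝ) < 1 - lam1 := by linarith
  have hq : 2 * (1 - lam1) / (1 - lam2) * (1 - lam2) = 2 * (1 - lam1) :=
    div_mul_cancel₀ _ (ne_of_gt hd2)
  have hqpos : 0 < 2 * (1 - lam1) / (1 - lam2) := by positivity
  -- from hf.2 : μ*(1-lam1) ≥ 2(1-lam1)/(1-lam2)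
  nlinarith [mul_le_mul_of_nonneg_right hf.2 (le_of_lt hd2),
    mul_pos hqpos hd2, mul_le_mul_of_nonneg_right hg.1 (le_of_lt hd1),
    mul_le_mul_of_nonneg_right hg.2 (le_of_lt hd1)]
end
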